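/- (Lemma 1, parametric DP pruning for fixed K.) Suppose for some m ∈ {k, ..., n-1} the changepoint vector τ ∈ T_{k-1,m} satisfies L_{k-1,m}(z, τ) > L^opt_{k-1,m}(z) for all z ∈ R. Then for all z ∈ R, L^opt_{k,n}(z) < L_{k-1,m}(z, τ) + C(x(z)_{m+1:n}); consequently, the concatenation concat(τ, m) is never an optimizer of L_{k,n}(z, ·) for any z ∈ R. -/

import Mathlib

/-- Segment mean of entries `s` through `e` of the sequence `x`. -/
noncomputable def segMean (x : ℕ → ℝ) (s e : ℕ) : ℝ :=
  (∑ i ∈ Finset.Icc s e, x i) / ((e - s + 1 : ℕ) : ℝ)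

/-- Segment cost `C(x_{s:e}) = ∑_{i=s}^e (x_i - x̄_{s:e})²`. -/
noncomputable def segCost (x : ℕ → ℝ) (s e : ℕ) : ℝ :=
  ∑ i ∈ Finset.Icc s e, (x i - segMean x s e) ^ 2

/-- The parametrized sequence `x(z) = a + b z`. -/
def paramSeq (a b : ℕ → ℝ) (z : ℝ) : ℕ → ℝ := fun i => a i + b i * z

/-- The segment boundaries `0 = τ₀ < τ₁ < ... < τ_k < τ_{k+1} = n` associated with a
changepoint vector `τ = (τ₁, ..., τ_k)`. -/
def bounds (n : ℕ) {k : ℕ} (τ : Fin k → ℕ) : Fin (k + 2) → ℕ :=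
  Fin.snoc (Fin.cons 0 τ) n

/-- `τ` is a valid `k`-dimensional changepoint vector for a length-`n` sequence:
strictly increasing with `1 ≤ τ_i ≤ n - 1`. -/
def validCP (n : ℕ) {k : ℕ} (τ : Fin k → ℕ) : Prop :=
  StrictMono τ ∧ ∀ i, 1 ≤ τ i ∧ τ i < n

/-- The segmentation loss `L_{k,n}(x, τ) = ∑_{κ=1}^{k+1} C(x_{τ_{κ-1}+1 : τ_κ})`. -/
noncomputable def cpLoss (x : ℕ → ℝ) (n : ℕ) {k : ℕ} (τ : Fin k → ℕ) : ℝ :=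
  ∑ κ : Fin (k + 1), segCost x (bounds n τ κ.castSucc + 1) (bounds n τ κ.succ)

/-- The optimal loss `L^opt_{k,n}(x) = min_{τ ∈ T_{k,n}} L_{k,n}(x, τ)`. -/
noncomputable def optLoss (x : ℕ → ℝ) (k n : ℕ) : ℝ :=
  sInf {r : ℝ | ∃ τ : Fin k → ℕ, validCP n τ ∧ r = cpLoss x n τ}


lemma segCost_nonneg (x : ℕ → ℝ) (s e : ℕ) : 0 ≤ segCost x s e :=
  Finset.sum_nonneg fun _ _ => sq_nonneg _

lemma cpLoss_nonneg (x : ℕ → ℝ) (n : ℕ) {k : ℕ} (τ : Fin k → ℕ) : 0 ≤ cpLoss x n τ :=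
  Finset.sum_nonneg fun _ _ => segCost_nonneg _ _ _

lemma bounds_snoc_castSucc (m n : ℕ) {j : ℕ} (τ : Fin j → ℕ) (i : Fin (j + 2)) :
    bounds n (Fin.snoc τ m) i.castSucc = bounds m τ i := by
  simp [bounds, ← Fin.cons_snoc_eq_snoc_cons, Fin.snoc_castSucc]

lemma cpLoss_snoc (x : ℕ → ℝ) {j : ℕ} (τ : Fin j → ℕ) (m n : ℕ) :
    cpLoss x n (Fin.snoc τ m) = cpLoss x m τ + segCost x (m + 1) n := by
  unfold cpLoss
  rw [Fin.sum_univ_castSucc]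
  congr 1
  · apply Finset.sum_congr rfl
    intro κ _
    rw [Fin.succ_castSucc, bounds_snoc_castSucc, bounds_snoc_castSucc]
  · have h1 : bounds n (Fin.snoc τ m) (Fin.last (j + 1)).castSucc = m := by
      rw [bounds_snoc_castSucc]
      simp [bounds]
    have h2 : bounds n (Fin.snoc τ m) (Fin.last (j + 1)).succ = n := by
      have : (Fin.last (j + 1)).succ = Fin.last (j + 2) := rfl
      rw [this]
      simp [bounds]
    rw [h1, h2]

lemma validCP_snoc {j m n : ℕ} (τ : Fin j → ℕ) (hτ : validCP m τ)
    (hm0 : 1 ≤ m) (hmn : m < n) : validCP n (Fin.snoc τ m) := by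
  obtain ⟨hmono, hrange⟩ := hτ
  constructor
  · intro i i' h
    induction i' using Fin.lastCases with
    | last =>
      obtain ⟨i0, rfl⟩ := Fin.exists_castSucc_eq.mpr (ne_of_lt h)
      simp only [Fin.snoc_castSucc, Fin.snoc_last]
      exact (hrange i0).2
    | cast i1 =>
      obtain ⟨i0, rfl⟩ :=
        Fin.exists_castSucc_eq.mpr (ne_of_lt (h.trans (Fin.castSucc_lt_last i1)))
      simp only [Fin.snoc_castSucc]
      exact hmono (Fin.castSucc_lt_castSucc_iff.mp h)
  · intro i
    refine Fin.lastCases ?_ (fun i0 => ?_) i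
    · simpa using ⟨hm0, hmn⟩
    · simp only [Fin.snoc_castSucc]
      exact ⟨(hrange i0).1, (hrange i0).2.trans hmn⟩


/-- Lemma 1 (parametric DP pruning, fixed `K`): if the `j`-dimensional changepoint
vector `τ` (for the length-`m` subproblem, `m ∈ {j+1, ..., n-1}`) is strictly
suboptimal for every `z`, then for every `z` the optimal loss `L^opt_{j+1,n}(z)` is
strictly smaller than `L_{j,m}(z, τ) + C(x(z)_{m+1:n})`, and hence the concatenation
`concat(τ, m)` is never an optimizer of `L_{j+1,n}(z, ·)` for any `z`. -/
theorem paraDP_prune_fixedK (a b : ℕ → ℝ) (j m n : ℕ) (τ : Fin j → ℕ)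
    (hm1 : j + 1 ≤ m) (hm2 : m ≤ n - 1) (hn : 1 ≤ n)
    (hτ : validCP m τ)
    (hsub : ∀ z : ℝ, optLoss (paramSeq a b z) j m < cpLoss (paramSeq a b z) m τ) :
    (∀ z : ℝ,
      optLoss (paramSeq a b z) (j + 1) n <
        cpLoss (paramSeq a b z) m τ + segCost (paramSeq a b z) (m + 1) n) ∧
    (∀ z : ℝ,
      optLoss (paramSeq a b z) (j + 1) n <
        cpLoss (paramSeq a b z) n (Fin.snoc τ m)) := by
  have hmn : m < n := lt_of_le_of_lt hm2 (Nat.sub_lt hn one_pos)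
  have hm0 : 1 ≤ m := le_trans (Nat.le_add_left 1 j) hm1
  have main : ∀ z : ℝ,
      optLoss (paramSeq a b z) (j + 1) n <
        cpLoss (paramSeq a b z) m τ + segCost (paramSeq a b z) (m + 1) n := by
    intro z
    set x := paramSeq a b z
    -- get strictly better σ for the (j, m) problem
    have hne : (cpLoss x m τ) ∈ {r : ℝ | ∃ σ : Fin j → ℕ, validCP m σ ∧ r = cpLoss x m σ} :=
      ⟨τ, hτ, rfl⟩
    obtain ⟨r, hr, hrlt⟩ := exists_lt_of_csInf_lt ⟨_, hne⟩ (hsub z)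
    obtain ⟨σ, hσv, rfl⟩ := hr
    have hval : validCP n (Fin.snoc σ m) := validCP_snoc σ hσv hm0 hmn
    have hbdd : BddBelow {r : ℝ | ∃ σ : Fin (j+1) → ℕ, validCP n σ ∧ r = cpLoss x n σ} := by
      refine ⟨0, ?_⟩
      rintro r ⟨σ', _, rfl⟩
      exact cpLoss_nonneg _ _ _
    have hle : optLoss x (j + 1) n ≤ cpLoss x n (Fin.snoc σ m) :=
      csInf_le hbdd ⟨Fin.snoc σ m, hval, rfl⟩
    calc optLoss x (j + 1) n ≤ cpLoss x n (Fin.snoc σ m) := hle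
      _ = cpLoss x m σ + segCost x (m + 1) n := cpLoss_snoc x σ m n
      _ < cpLoss x m τ + segCost x (m + 1) n := by linarith
  exact ⟨main, fun z => by rw [cpLoss_snoc]; exact main z⟩
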